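/- arXiv:1009.1306 — 2 statements merged into one kernel-verified Lean document; each statement's English description precedes it below -/
import Mathlib

section
/- (Reduction to a half line.) The operator U′_J = I_κ ⊗ U_J satisfies: U′_J|Own,0,ε⟩ = a_κ|Own,1,Down⟩ + √(κ−1) b_κ|Other,1,Down⟩; U′_J|Other,0,ε⟩ = √(κ−1) b_κ|Own,1,Down⟩ − a_κ|Other,1,Down⟩; for m ∈ {Own,Other}: U′_J|m,1,Up⟩ = a|m,0,ε⟩ + c|m,2,Down⟩, U′_J|m,x,Up⟩ = a|m,x−1,Up⟩ + c|m,x+1,Down⟩ for x ≥ 2, U′_J|m,1,Down⟩ = b|m,0,ε⟩ + d|m,2,Down⟩, and U′_J|m,x,Down⟩ = b|m,x−1,Up⟩ + d|m,x+1,Down⟩ for x ≥ 2. In particular, the subspace spanned by {|Own,0,ε⟩, |Other,0,ε⟩} ∪ {|m,x,l⟩ : m ∈ {Own,Other}, x ≥ 1, l ∈ {Up,Down}} is invariant under U′_J. -/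
/-!
Reduction of the enlarged walk `W'_{t,κ}` to a walk on a half line:
the action of `U'_J = I_κ ⊗ U_J` on the enlarged basis
`{|Own,0,ε⟩, |Other,0,ε⟩} ∪ {|m,x,l⟩ : m ∈ {Own,Other}, x ≥ 1, l ∈ {Up,Down}}`,
and the invariance of the subspace it spans.
-/

noncomputable section

namespace QW

inductive Dir : Type
  | up : Dir
  | down : Dir
  deriving DecidableEq

/-- Basis of the Hilbert space of `J_κ`: `Sum.inl r` is `|0, ε_r⟩`,
`Sum.inr (r, n, l)` is `|h_r(n+1), l⟩`. -/
abbrev JB (κ : ℕ) := Fin κ ⊕ (Fin κ × ℕ × Dir)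

/-- Coin operator `F_J`: Grover coin `G_κ` at the origin, `C = [[a,b],[c,d]]`
(in the ordered basis `(Up, Down)`) at every other vertex. -/
def coinOp (κ : ℕ) (a b c d : ℂ) (α : JB κ → ℂ) : JB κ → ℂ
  | Sum.inl r => ∑ j : Fin κ, (if r = j then 2 / (κ : ℂ) - 1 else 2 / (κ : ℂ)) * α (Sum.inl j)
  | Sum.inr (r, n, Dir.up) => a * α (Sum.inr (r, n, Dir.up)) + b * α (Sum.inr (r, n, Dir.down))
  | Sum.inr (r, n, Dir.down) => c * α (Sum.inr (r, n, Dir.up)) + d * α (Sum.inr (r, n, Dir.down))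

/-- Shift operator `S_J` (acting on amplitude functions). -/
def shiftOp (κ : ℕ) (α : JB κ → ℂ) : JB κ → ℂ
  | Sum.inl r => α (Sum.inr (r, 0, Dir.up))
  | Sum.inr (r, n, Dir.up) => α (Sum.inr (r, n + 1, Dir.up))
  | Sum.inr (r, 0, Dir.down) => α (Sum.inl r)
  | Sum.inr (r, n + 1, Dir.down) => α (Sum.inr (r, n, Dir.down))

/-- One step evolution `U_J = S_J F_J`. -/
def evolve (κ : ℕ) (a b c d : ℂ) (α : JB κ → ℂ) : JB κ → ℂ :=
  shiftOp κ (coinOp κ a b c d α)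

/-- State at time `t` starting from `Σ_j ψ_j |0, ε_j⟩`. -/
def state (κ : ℕ) (a b c d : ℂ) (ψ : Fin κ → ℂ) (t : ℕ) : JB κ → ℂ :=
  (evolve κ a b c d)^[t] (fun e => match e with | Sum.inl j => ψ j | _ => 0)

/-- `P(X_{t,r} = x)`. -/
def prob (κ : ℕ) (a b c d : ℂ) (ψ : Fin κ → ℂ) (t : ℕ) (r : Fin κ) (x : ℕ) : ℝ :=
  match x with
  | 0 => ‖state κ a b c d ψ t (Sum.inl r)‖ ^ 2
  | n + 1 =>
      ‖state κ a b c d ψ t (Sum.inr (r, n, Dir.up))‖ ^ 2 +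
        ‖state κ a b c d ψ t (Sum.inr (r, n, Dir.down))‖ ^ 2

/-- The enlarged walk `U'_J = I_κ ⊗ U_J`. -/
def evolve' (κ : ℕ) (a b c d : ℂ) (α : Fin κ × JB κ → ℂ) : Fin κ × JB κ → ℂ :=
  fun p => evolve κ a b c d (fun e => α (p.1, e)) p.2

/-- `|Own, 0, ε⟩ = Σ_j |ε'_j⟩ ⊗ |0, ε_j⟩`. -/
def vOwn0 (κ : ℕ) : Fin κ × JB κ → ℂ :=
  fun p => if p.2 = Sum.inl p.1 then 1 else 0

/-- `|Other, 0, ε⟩ = (κ-1)^{-1/2} Σ_j Σ_{k ≠ j} |ε'_k⟩ ⊗ |0, ε_j⟩`. -/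
def vOther0 (κ : ℕ) : Fin κ × JB κ → ℂ :=
  fun p =>
    match p.2 with
    | Sum.inl j => if p.1 ≠ j then ((Real.sqrt ((κ : ℝ) - 1) : ℂ))⁻¹ else 0
    | _ => 0

/-- `|Own, n+1, l⟩ = Σ_j |ε'_j⟩ ⊗ |h_j(n+1), l⟩`. -/
def vOwn (κ : ℕ) (n : ℕ) (l : Dir) : Fin κ × JB κ → ℂ :=
  fun p => if p.2 = Sum.inr (p.1, n, l) then 1 else 0

/-- `|Other, n+1, l⟩ = (κ-1)^{-1/2} Σ_j Σ_{k ≠ j} |ε'_k⟩ ⊗ |h_j(n+1), l⟩`. -/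
def vOther (κ : ℕ) (n : ℕ) (l : Dir) : Fin κ × JB κ → ℂ :=
  fun p =>
    match p.2 with
    | Sum.inr (j, m, l') =>
        if p.1 ≠ j ∧ m = n ∧ l' = l then ((Real.sqrt ((κ : ℝ) - 1) : ℂ))⁻¹ else 0
    | _ => 0

/-- The enlarged basis set. -/
def redBasis (κ : ℕ) : Set (Fin κ × JB κ → ℂ) :=
  insert (vOwn0 κ) (insert (vOther0 κ)
    (Set.range (fun q : ℕ × Dir => vOwn κ q.1 q.2) ∪
      Set.range (fun q : ℕ × Dir => vOther κ q.1 q.2)))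

variable (κ : ℕ) (a b c d : ℂ)

lemma sq_sqrt' (hκ : 2 ≤ κ) :
    ((Real.sqrt ((κ : ℝ) - 1) : ℂ)) * ((Real.sqrt ((κ : ℝ) - 1) : ℂ)) = (κ : ℂ) - 1 := by
  have h1 : (1 : ℝ) ≤ (κ : ℝ) := by exact_mod_cast Nat.one_le_of_lt hκ
  have : Real.sqrt ((κ : ℝ) - 1) * Real.sqrt ((κ : ℝ) - 1) = (κ : ℝ) - 1 :=
    Real.mul_self_sqrt (by linarith)
  exact_mod_cast congrArg (Complex.ofReal) this

lemma sqrt_ne' (hκ : 2 ≤ κ) : ((Real.sqrt ((κ : ℝ) - 1) : ℂ)) ≠ 0 := by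
  have h1 : (2 : ℝ) ≤ (κ : ℝ) := by exact_mod_cast hκ
  have : 0 < Real.sqrt ((κ : ℝ) - 1) := Real.sqrt_pos.mpr (by linarith)
  exact_mod_cast Complex.ofReal_ne_zero.mpr this.ne'

lemma ev_own0 (hκ : 2 ≤ κ) : evolve' κ a b c d (vOwn0 κ) =
    (2 / (κ : ℂ) - 1) • vOwn κ 0 Dir.down +
      ((Real.sqrt ((κ : ℝ) - 1) : ℂ) * (2 / (κ : ℂ))) • vOther κ 0 Dir.down := by
  have hs := sqrt_ne' κ hκ
  funext ⟨k, e⟩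
  rcases e with r | ⟨r, n, l⟩
  · simp [evolve', evolve, shiftOp, coinOp, vOwn, vOther, vOwn0]
  · rcases n with _ | n <;> rcases l with _ | _ <;>
      simp [evolve', evolve, shiftOp, coinOp, vOwn, vOther, vOwn0]
    rcases eq_or_ne r k with h | h
    · simp [h]
    · simp [h, Ne.symm h]
      rw [mul_comm ((Real.sqrt ((κ : ℝ) - 1) : ℂ)) (2 / (κ : ℂ)), mul_assoc,
        mul_inv_cancel₀ hs, mul_one]

lemma ev_oth0 (κ : ℕ) (hκ : 2 ≤ κ) (a b c d : ℂ) : evolve' κ a b c d (vOther0 κ) =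
    ((Real.sqrt ((κ : ℝ) - 1) : ℂ) * (2 / (κ : ℂ))) • vOwn κ 0 Dir.down -
      (2 / (κ : ℂ) - 1) • vOther κ 0 Dir.down := by
  have hs := sqrt_ne' κ hκ
  have hss := sq_sqrt' κ hκ
  have hκ0 : (κ : ℂ) ≠ 0 := Nat.cast_ne_zero.mpr (by omega)
  set s : ℂ := (Real.sqrt ((κ : ℝ) - 1) : ℂ) with hsdef
  funext ⟨k, e⟩
  rcases e with r | ⟨r, n, l⟩
  · simp [evolve', evolve, shiftOp, coinOp, vOwn, vOther, vOther0]
  · rcases n with _ | n <;> rcases l with _ | _ <;>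
      simp [evolve', evolve, shiftOp, coinOp, vOwn, vOther, vOther0]
    have hs1 : ((Real.sqrt ((κ : ℝ) - 1) : ℂ)) = s := hsdef.symm
    have hs2 : ((Real.sqrt (-1 + (κ : ℝ)) : ℂ)) = s := by rw [hsdef, neg_add_eq_sub]
    simp only [hs1, hs2]
    rcases eq_or_ne r k with h | h
    · subst h
      rw [Finset.sum_congr rfl (fun j _ =>
        show _ = 2 / (κ : ℂ) * s⁻¹ - (if r = j then 2 / (κ : ℂ) * s⁻¹ else 0) from by
          split <;> simp)]
      rw [Finset.sum_sub_distrib, Finset.sum_const, Finset.sum_ite_eq _ r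
        (fun _ => 2 / (κ : ℂ) * s⁻¹), Finset.card_univ, Fintype.card_fin]
      simp only [Finset.mem_univ, if_pos, nsmul_eq_mul]
      field_simp
      linear_combination (-2 : ℂ) * hss
    · rw [Finset.sum_congr rfl (fun j _ =>
        show _ = 2 / (κ : ℂ) * s⁻¹ + (if r = j then (2 / (κ : ℂ) - 1 - 2 / (κ : ℂ)) * s⁻¹ else 0)
            + (if k = j then -(2 / (κ : ℂ) * s⁻¹) else 0) from by
          rcases eq_or_ne r j with h1 | h1 <;> rcases eq_or_ne k j with h2 | h2 <;>
            simp [h1, h2] <;> first | (exfalso; exact h (h1.trans h2.symm)) | ring)]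
      rw [Finset.sum_add_distrib, Finset.sum_add_distrib, Finset.sum_const,
        Finset.sum_ite_eq, Finset.sum_ite_eq, Finset.card_univ, Fintype.card_fin]
      simp only [Finset.mem_univ, if_pos, nsmul_eq_mul, if_neg h, Ne.symm h, if_neg (Ne.symm h)]
      rw [if_neg (by simpa using h)]
      field_simp
      ring

variable (κ : ℕ) (a b c d : ℂ)

lemma ev_own_up0 : evolve' κ a b c d (vOwn κ 0 Dir.up) = a • vOwn0 κ + c • vOwn κ 1 Dir.down := by
  funext ⟨k, e⟩
  rcases e with r | ⟨r, n, l⟩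
  · simp [evolve', evolve, shiftOp, coinOp, vOwn, vOwn0]
  · rcases n with _ | n <;> rcases l with _ | _ <;>
      simp [evolve', evolve, shiftOp, coinOp, vOwn, vOwn0]

lemma ev_own_up (n : ℕ) : evolve' κ a b c d (vOwn κ (n + 1) Dir.up) =
    a • vOwn κ n Dir.up + c • vOwn κ (n + 2) Dir.down := by
  funext ⟨k, e⟩
  rcases e with r | ⟨r, m, l⟩
  · simp [evolve', evolve, shiftOp, coinOp, vOwn, eq_comm]
  · rcases m with _ | m <;> rcases l with _ | _ <;>
      simp [evolve', evolve, shiftOp, coinOp, vOwn, eq_comm]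

lemma ev_own_dn0 : evolve' κ a b c d (vOwn κ 0 Dir.down) = b • vOwn0 κ + d • vOwn κ 1 Dir.down := by
  funext ⟨k, e⟩
  rcases e with r | ⟨r, n, l⟩
  · simp [evolve', evolve, shiftOp, coinOp, vOwn, vOwn0]
  · rcases n with _ | n <;> rcases l with _ | _ <;>
      simp [evolve', evolve, shiftOp, coinOp, vOwn, vOwn0]

lemma ev_own_dn (n : ℕ) : evolve' κ a b c d (vOwn κ (n + 1) Dir.down) =
    b • vOwn κ n Dir.up + d • vOwn κ (n + 2) Dir.down := by
  funext ⟨k, e⟩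
  rcases e with r | ⟨r, m, l⟩
  · simp [evolve', evolve, shiftOp, coinOp, vOwn, eq_comm]
  · rcases m with _ | m <;> rcases l with _ | _ <;>
      simp [evolve', evolve, shiftOp, coinOp, vOwn, eq_comm]

lemma ev_oth_up0 : evolve' κ a b c d (vOther κ 0 Dir.up) = a • vOther0 κ + c • vOther κ 1 Dir.down := by
  funext ⟨k, e⟩
  rcases e with r | ⟨r, n, l⟩
  · simp [evolve', evolve, shiftOp, coinOp, vOther, vOther0]
  · rcases n with _ | n <;> rcases l with _ | _ <;>
      simp [evolve', evolve, shiftOp, coinOp, vOther, vOther0]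

lemma ev_oth_up (n : ℕ) : evolve' κ a b c d (vOther κ (n + 1) Dir.up) =
    a • vOther κ n Dir.up + c • vOther κ (n + 2) Dir.down := by
  funext ⟨k, e⟩
  rcases e with r | ⟨r, m, l⟩
  · simp [evolve', evolve, shiftOp, coinOp, vOther, eq_comm]
  · rcases m with _ | m <;> rcases l with _ | _ <;>
      simp [evolve', evolve, shiftOp, coinOp, vOther, eq_comm]

lemma ev_oth_dn0 : evolve' κ a b c d (vOther κ 0 Dir.down) = b • vOther0 κ + d • vOther κ 1 Dir.down := by
  funext ⟨k, e⟩
  rcases e with r | ⟨r, n, l⟩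
  · simp [evolve', evolve, shiftOp, coinOp, vOther, vOther0]
  · rcases n with _ | n <;> rcases l with _ | _ <;>
      simp [evolve', evolve, shiftOp, coinOp, vOther, vOther0]

lemma ev_oth_dn (n : ℕ) : evolve' κ a b c d (vOther κ (n + 1) Dir.down) =
    b • vOther κ n Dir.up + d • vOther κ (n + 2) Dir.down := by
  funext ⟨k, e⟩
  rcases e with r | ⟨r, m, l⟩
  · simp [evolve', evolve, shiftOp, coinOp, vOther, eq_comm]
  · rcases m with _ | m <;> rcases l with _ | _ <;>
      simp [evolve', evolve, shiftOp, coinOp, vOther, eq_comm]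

variable (κ : ℕ) (a b c d : ℂ)

lemma evolve'_add (u v : Fin κ × JB κ → ℂ) :
    evolve' κ a b c d (u + v) = evolve' κ a b c d u + evolve' κ a b c d v := by
  funext ⟨k, e⟩
  rcases e with r | ⟨r, n, l⟩
  · simp [evolve', evolve, shiftOp, coinOp]; ring
  · rcases n with _ | n <;> rcases l with _ | _ <;>
      simp [evolve', evolve, shiftOp, coinOp, Finset.sum_add_distrib, mul_add] <;> ring

lemma evolve'_smul (t : ℂ) (v : Fin κ × JB κ → ℂ) :
    evolve' κ a b c d (t • v) = t • evolve' κ a b c d v := by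
  funext ⟨k, e⟩
  rcases e with r | ⟨r, n, l⟩
  · simp [evolve', evolve, shiftOp, coinOp]; ring
  · rcases n with _ | n <;> rcases l with _ | _ <;>
      simp [evolve', evolve, shiftOp, coinOp] <;> try ring
    rw [Finset.mul_sum]
    exact Finset.sum_congr rfl fun j _ => by split <;> ring

lemma evolve'_zero : evolve' κ a b c d 0 = 0 := by
  funext ⟨k, e⟩
  rcases e with r | ⟨r, n, l⟩
  · simp [evolve', evolve, shiftOp, coinOp]
  · rcases n with _ | n <;> rcases l with _ | _ <;>
      simp [evolve', evolve, shiftOp, coinOp]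

lemma mem_vOwn0 : vOwn0 κ ∈ redBasis κ := Or.inl rfl
lemma mem_vOther0 : vOther0 κ ∈ redBasis κ := Or.inr (Or.inl rfl)
lemma mem_vOwn (n : ℕ) (l : Dir) : vOwn κ n l ∈ redBasis κ :=
  Or.inr (Or.inr (Or.inl ⟨(n, l), rfl⟩))
lemma mem_vOther (n : ℕ) (l : Dir) : vOther κ n l ∈ redBasis κ :=
  Or.inr (Or.inr (Or.inr ⟨(n, l), rfl⟩))

/-- **Reduction to a half line.** -/
theorem reduction_to_half_line (κ : ℕ) (hκ : 2 ≤ κ) (a b c d : ℂ)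
    (hU : !![a, b; c, d] ∈ Matrix.unitaryGroup (Fin 2) ℂ) (h0 : a * b * c * d ≠ 0) :
    (evolve' κ a b c d (vOwn0 κ) =
        (2 / (κ : ℂ) - 1) • vOwn κ 0 Dir.down +
          ((Real.sqrt ((κ : ℝ) - 1) : ℂ) * (2 / (κ : ℂ))) • vOther κ 0 Dir.down) ∧
    (evolve' κ a b c d (vOther0 κ) =
        ((Real.sqrt ((κ : ℝ) - 1) : ℂ) * (2 / (κ : ℂ))) • vOwn κ 0 Dir.down -
          (2 / (κ : ℂ) - 1) • vOther κ 0 Dir.down) ∧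
    (evolve' κ a b c d (vOwn κ 0 Dir.up) = a • vOwn0 κ + c • vOwn κ 1 Dir.down) ∧
    (∀ n : ℕ, evolve' κ a b c d (vOwn κ (n + 1) Dir.up) =
        a • vOwn κ n Dir.up + c • vOwn κ (n + 2) Dir.down) ∧
    (evolve' κ a b c d (vOwn κ 0 Dir.down) = b • vOwn0 κ + d • vOwn κ 1 Dir.down) ∧
    (∀ n : ℕ, evolve' κ a b c d (vOwn κ (n + 1) Dir.down) =
        b • vOwn κ n Dir.up + d • vOwn κ (n + 2) Dir.down) ∧
    (evolve' κ a b c d (vOther κ 0 Dir.up) = a • vOther0 κ + c • vOther κ 1 Dir.down) ∧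
    (∀ n : ℕ, evolve' κ a b c d (vOther κ (n + 1) Dir.up) =
        a • vOther κ n Dir.up + c • vOther κ (n + 2) Dir.down) ∧
    (evolve' κ a b c d (vOther κ 0 Dir.down) = b • vOther0 κ + d • vOther κ 1 Dir.down) ∧
    (∀ n : ℕ, evolve' κ a b c d (vOther κ (n + 1) Dir.down) =
        b • vOther κ n Dir.up + d • vOther κ (n + 2) Dir.down) ∧
    (∀ v ∈ Submodule.span ℂ (redBasis κ),
        evolve' κ a b c d v ∈ Submodule.span ℂ (redBasis κ)) := by
  refine ⟨ev_own0 κ a b c d hκ, ev_oth0 κ hκ a b c d, ev_own_up0 κ a b c d,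
    fun n => ev_own_up κ a b c d n, ev_own_dn0 κ a b c d, fun n => ev_own_dn κ a b c d n,
    ev_oth_up0 κ a b c d, fun n => ev_oth_up κ a b c d n, ev_oth_dn0 κ a b c d,
    fun n => ev_oth_dn κ a b c d n, ?_⟩
  intro v hv
  have sub : redBasis κ ⊆ (Submodule.span ℂ (redBasis κ) : Set _) := Submodule.subset_span
  induction hv using Submodule.span_induction with
  | mem x hx =>
      simp only [redBasis, Set.mem_insert_iff, Set.mem_union, Set.mem_range] at hx
      rcases hx with rfl | rfl | ⟨⟨n, l⟩, rfl⟩ | ⟨⟨n, l⟩, rfl⟩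
      · rw [ev_own0 κ a b c d hκ]
        exact Submodule.add_mem _ (Submodule.smul_mem _ _ (sub (mem_vOwn κ 0 Dir.down)))
          (Submodule.smul_mem _ _ (sub (mem_vOther κ 0 Dir.down)))
      · rw [ev_oth0 κ hκ a b c d]
        exact Submodule.sub_mem _ (Submodule.smul_mem _ _ (sub (mem_vOwn κ 0 Dir.down)))
          (Submodule.smul_mem _ _ (sub (mem_vOther κ 0 Dir.down)))
      · rcases l with _ | _ <;> rcases n with _ | n
        · rw [ev_own_up0 κ a b c d]
          exact Submodule.add_mem _ (Submodule.smul_mem _ _ (sub (mem_vOwn0 κ)))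
            (Submodule.smul_mem _ _ (sub (mem_vOwn κ 1 Dir.down)))
        · rw [ev_own_up κ a b c d n]
          exact Submodule.add_mem _ (Submodule.smul_mem _ _ (sub (mem_vOwn κ n Dir.up)))
            (Submodule.smul_mem _ _ (sub (mem_vOwn κ (n + 2) Dir.down)))
        · rw [ev_own_dn0 κ a b c d]
          exact Submodule.add_mem _ (Submodule.smul_mem _ _ (sub (mem_vOwn0 κ)))
            (Submodule.smul_mem _ _ (sub (mem_vOwn κ 1 Dir.down)))
        · rw [ev_own_dn κ a b c d n]
          exact Submodule.add_mem _ (Submodule.smul_mem _ _ (sub (mem_vOwn κ n Dir.up)))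
            (Submodule.smul_mem _ _ (sub (mem_vOwn κ (n + 2) Dir.down)))
      · rcases l with _ | _ <;> rcases n with _ | n
        · rw [ev_oth_up0 κ a b c d]
          exact Submodule.add_mem _ (Submodule.smul_mem _ _ (sub (mem_vOther0 κ)))
            (Submodule.smul_mem _ _ (sub (mem_vOther κ 1 Dir.down)))
        · rw [ev_oth_up κ a b c d n]
          exact Submodule.add_mem _ (Submodule.smul_mem _ _ (sub (mem_vOther κ n Dir.up)))
            (Submodule.smul_mem _ _ (sub (mem_vOther κ (n + 2) Dir.down)))
        · rw [ev_oth_dn0 κ a b c d]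
          exact Submodule.add_mem _ (Submodule.smul_mem _ _ (sub (mem_vOther0 κ)))
            (Submodule.smul_mem _ _ (sub (mem_vOther κ 1 Dir.down)))
        · rw [ev_oth_dn κ a b c d n]
          exact Submodule.add_mem _ (Submodule.smul_mem _ _ (sub (mem_vOther κ n Dir.up)))
            (Submodule.smul_mem _ _ (sub (mem_vOther κ (n + 2) Dir.down)))
  | zero => rw [evolve'_zero κ a b c d]; exact Submodule.zero_mem _
  | add x y _ _ hx hy => rw [evolve'_add κ a b c d x y]; exact Submodule.add_mem _ hx hy
  | smul t x _ hx => rw [evolve'_smul κ a b c d t x]; exact Submodule.smul_mem _ _ hx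

end QW
end
end

section
/- (Unimodularity of the roots v_±(s).) Let C = [[a,b],[c,d]] ∈ U(2) with abcd ≠ 0 and Δ = ad − bc. Then for every real s, every complex root v of the quadratic equation Δv² − (a e^{−is} + ā Δ e^{is}) v + 1 = 0 satisfies |v| = 1. -/
/-!
Unimodularity of the roots `v_±(s)` of `Δv² - (a e^{-is} + ā Δ e^{is}) v + 1 = 0`.
-/

namespace QW

/-- **Unimodularity of the roots `v_±(s)`.** -/
theorem roots_unimodular (a b c d : ℂ)
    (hU : !![a, b; c, d] ∈ Matrix.unitaryGroup (Fin 2) ℂ) (h0 : a * b * c * d ≠ 0)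
    (s : ℝ) (v : ℂ)
    (hv : (a * d - b * c) * v ^ 2 -
        (a * Complex.exp (-(s : ℂ) * Complex.I) +
          (starRingEnd ℂ) a * (a * d - b * c) * Complex.exp ((s : ℂ) * Complex.I)) * v + 1 = 0) :
    ‖v‖ = 1 := by
  have hb : b ≠ 0 := by intro h; apply h0; rw [h]; ring
  set Δ : ℂ := a * d - b * c with hΔdef
  set E : ℂ := Complex.exp (-(s : ℂ) * Complex.I) with hEdef
  set F : ℂ := Complex.exp ((s : ℂ) * Complex.I) with hFdef
  set τ : ℂ := a * E + (starRingEnd ℂ) a * Δ * F with hτdef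
  -- |Δ| = 1
  have hdet := Matrix.det_of_mem_unitary hU
  rw [Matrix.det_fin_two_of] at hdet
  have hΔ1 : (starRingEnd ℂ) Δ * Δ = 1 := hdet.1
  -- |a| < 1
  have hmul := Matrix.mem_unitaryGroup_iff.mp hU
  have h00 := congrArg (fun M : Matrix (Fin 2) (Fin 2) ℂ => M 0 0) hmul
  simp [Matrix.mul_apply, Fin.sum_univ_succ, Matrix.star_apply] at h00
  have ha2 : Complex.normSq a + Complex.normSq b = 1 := by
    rw [Complex.mul_conj, Complex.mul_conj] at h00
    exact_mod_cast h00
  have hb0 : 0 < Complex.normSq b := Complex.normSq_pos.mpr hb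
  have haA : ‖a‖ < 1 := by
    have h1 : Complex.normSq a < 1 := by linarith
    have := Complex.sq_norm a
    nlinarith [norm_nonneg a]
  -- conjugates of E, F
  have hEF : (starRingEnd ℂ) E = F := by
    rw [hEdef, hFdef, ← Complex.exp_conj]
    congr 1
    simp [Complex.conj_I]
  have hFE : (starRingEnd ℂ) F = E := by
    rw [hEdef, hFdef, ← Complex.exp_conj]
    congr 1
    simp [Complex.conj_I]
  -- τ = Δ * conj τ
  have hτ : τ = Δ * (starRingEnd ℂ) τ := by
    rw [hτdef]
    simp only [map_add, map_mul, hEF, hFE, RingHom.id_apply, Complex.conj_conj]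
    linear_combination - (a * E) * hΔ1
  -- conjugated equation, multiplied by Δ
  have hv2 : (starRingEnd ℂ) v ^ 2 - τ * (starRingEnd ℂ) v + Δ = 0 := by
    have hc := congrArg (starRingEnd ℂ) hv
    simp only [map_add, map_sub, map_mul, map_pow, map_one, map_zero] at hc
    -- hc : conj Δ * conj v ^ 2 - conj τ * conj v + 1 = 0
    have := congrArg (fun z => Δ * z) hc
    simp only [mul_zero] at this
    calc (starRingEnd ℂ) v ^ 2 - τ * (starRingEnd ℂ) v + Δ
        = Δ * ((starRingEnd ℂ) Δ * (starRingEnd ℂ) v ^ 2 - (starRingEnd ℂ) τ * (starRingEnd ℂ) v + 1) := by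
          rw [show Δ * ((starRingEnd ℂ) Δ * (starRingEnd ℂ) v ^ 2 - (starRingEnd ℂ) τ * (starRingEnd ℂ) v + 1)
              = (Δ * (starRingEnd ℂ) Δ) * (starRingEnd ℂ) v ^ 2 - (Δ * (starRingEnd ℂ) τ) * (starRingEnd ℂ) v + Δ by ring,
            mul_comm Δ ((starRingEnd ℂ) Δ), hΔ1, ← hτ, one_mul]
      _ = 0 := this
  -- factorization
  have hfac : (v * (starRingEnd ℂ) v - 1) * (Δ * v - (starRingEnd ℂ) v) = 0 := by
    linear_combination (starRingEnd ℂ) v * hv - v * hv2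
  rcases mul_eq_zero.mp hfac with h | h
  · -- v * conj v = 1
    have h1 : (Complex.normSq v : ℂ) = 1 := by rw [← Complex.mul_conj]; linear_combination h
    have h2 : Complex.normSq v = 1 := by exact_mod_cast h1
    have h3 : ‖v‖ ^ 2 = 1 := by rw [Complex.sq_norm]; exact h2
    nlinarith [norm_nonneg v]
  · -- conj v = Δ * v : contradiction
    exfalso
    have hcv : (starRingEnd ℂ) v = Δ * v := by linear_combination -h
    have hkey : (Complex.normSq v : ℂ) + 1 = τ * v := by
      rw [← Complex.mul_conj]; linear_combination v * hcv + hv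
    have hvne : v ≠ 0 := by
      intro h'; rw [h'] at hv; simp at hv
    have hvpos : 0 < ‖v‖ := norm_pos_iff.mpr hvne
    -- |E| = |F| = 1
    have hEabs : ‖E‖ = 1 := by
      rw [hEdef, Complex.norm_exp]; simp
    have hFabs : ‖F‖ = 1 := by
      rw [hFdef, Complex.norm_exp]; simp
    have hΔabs : ‖Δ‖ = 1 := by
      have := congrArg (norm : ℂ → ℝ) hΔ1
      simp only [norm_mul, norm_one, Complex.norm_conj] at this
      nlinarith [norm_nonneg Δ]
    have hτabs : ‖τ‖ ≤ 2 * ‖a‖ := by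
      calc ‖τ‖ ≤ ‖a * E‖ + ‖(starRingEnd ℂ) a * Δ * F‖ :=
            norm_add_le _ _
        _ = 2 * ‖a‖ := by
            simp only [norm_mul, Complex.norm_conj, hEabs, hFabs, hΔabs]; ring
    have habs := congrArg (norm : ℂ → ℝ) hkey
    rw [norm_mul] at habs
    have hlhs : ‖(Complex.normSq v : ℂ) + 1‖ = Complex.normSq v + 1 := by
      rw [show ((Complex.normSq v : ℂ) + 1) = ((Complex.normSq v + 1 : ℝ) : ℂ) by push_cast; ring,
        Complex.norm_real, Real.norm_eq_abs, abs_of_pos]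
      linarith [Complex.normSq_nonneg v]
    rw [hlhs] at habs
    have hsq : Complex.normSq v = ‖v‖ ^ 2 := (Complex.sq_norm v).symm
    nlinarith [sq_nonneg (‖v‖ - 1), norm_nonneg τ]

end QW
end
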